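/- arXiv:2107.06444 — 8 statements merged into one kernel-verified Lean document; each statement's English description precedes it below -/
import Mathlib

section
/- Let A be a well-founded poset, H a Hilbert space, and (H_a)_{a∈A} a monotone family of closed subspaces of H. Then (H_a)_{a∈A} is decomposable if and only if it satisfies the intersection property. -/
open Submodule

variable {𝕜 E : Type*} [RCLike 𝕜] [NormedAddCommGroup E] [InnerProductSpace 𝕜 E]
  [CompleteSpace E]

/-- The orthogonal projection of `E` onto the topological closure of `K`,
as a continuous linear map `E →L[𝕜] E`. -/
noncomputable def projC (K : Submodule 𝕜 E) : E →L[𝕜] E :=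
  haveI : CompleteSpace K.topologicalClosure :=
    K.isClosed_topologicalClosure.completeSpace_coe
  K.topologicalClosure.subtypeL.comp (orthogonalProjection K.topologicalClosure)

/-- `π(B)`: the orthogonal projection onto the closed span of the `H b`, `b ∈ B`. -/
noncomputable def piProj {A : Type*} [PartialOrder A] (H : A → Submodule 𝕜 E)
    (B : Set A) : E →L[𝕜] E :=
  projC (⨆ b ∈ B, H b)

/-- A monotone family `(H_a)_{a ∈ A}` of closed subspaces of `E` is decomposable if there is
a family `(S_a)_{a ∈ A⁺}` of pairwise orthogonal closed subspaces whose total closed span is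
`E` and whose partial closed spans over `{b ≤ a}` recover each `H_a`. -/
def Decomposable {A : Type*} [PartialOrder A] (H : A → Submodule 𝕜 E) : Prop :=
  ∃ S : WithTop A → Submodule 𝕜 E,
    (∀ a, IsClosed ((S a : Submodule 𝕜 E) : Set E)) ∧
    (∀ a b, a ≠ b → ∀ u ∈ S a, ∀ v ∈ S b, (inner 𝕜 u v : 𝕜) = 0) ∧
    (⨆ a, S a).topologicalClosure = ⊤ ∧
    (∀ a : A, (⨆ b ∈ {b : A | b ≤ a}, S (b : WithTop A)).topologicalClosure = H a)

/-- The intersection property: `π({c ≤ a} ∩ {c ≤ b}) = π_a ∘ π_b`. -/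
def IntersectionProperty {A : Type*} [PartialOrder A] (H : A → Submodule 𝕜 E) : Prop :=
  ∀ a b : A,
    piProj H {c | c ≤ a ∧ c ≤ b} =
      (piProj H {c | c ≤ a}).comp (piProj H {c | c ≤ b})

local notation "⟪" x ", " y "⟫" => @inner 𝕜 _ _ x y

lemma orthogonal_topClosure (K : Submodule 𝕜 E) : K.topologicalClosureᗮ = Kᗮ := by
  haveI : CompleteSpace Kᗮ := K.isClosed_orthogonal.completeSpace_coe
  haveI : HasOrthogonalProjection Kᗮ := HasOrthogonalProjection.ofCompleteSpace _
  rw [← K.orthogonal_orthogonal_eq_closure]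
  exact Kᗮ.orthogonal_orthogonal

lemma projC_mem (K : Submodule 𝕜 E) (x : E) : projC K x ∈ K.topologicalClosure := by
  haveI : CompleteSpace K.topologicalClosure :=
    K.isClosed_topologicalClosure.completeSpace_coe
  exact (orthogonalProjection K.topologicalClosure x).2

lemma sub_projC_mem (K : Submodule 𝕜 E) (x : E) : x - projC K x ∈ Kᗮ := by
  haveI : CompleteSpace K.topologicalClosure :=
    K.isClosed_topologicalClosure.completeSpace_coe
  rw [← orthogonal_topClosure]
  exact sub_starProjection_mem_orthogonal (K := K.topologicalClosure) x

lemma projC_eq {K : Submodule 𝕜 E} {x y : E} (hy : y ∈ K.topologicalClosure)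
    (h : x - y ∈ Kᗮ) : projC K x = y := by
  haveI : CompleteSpace K.topologicalClosure :=
    K.isClosed_topologicalClosure.completeSpace_coe
  rw [← orthogonal_topClosure] at h
  exact eq_starProjection_of_mem_orthogonal (K := K.topologicalClosure) hy h

lemma projC_eq_self {K : Submodule 𝕜 E} {x : E} (hx : x ∈ K.topologicalClosure) :
    projC K x = x := projC_eq hx (by simp)

lemma projC_eq_zero {K : Submodule 𝕜 E} {x : E} (hx : x ∈ Kᗮ) : projC K x = 0 :=
  projC_eq (zero_mem _) (by simpa)

lemma projC_congr {K L : Submodule 𝕜 E} (h : K.topologicalClosure = L.topologicalClosure) :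
    projC K = projC L := by
  ext x
  refine (projC_eq (h ▸ projC_mem K x) ?_).symm
  rw [← orthogonal_topClosure, ← h, orthogonal_topClosure]
  exact sub_projC_mem K x

omit [CompleteSpace E] in
lemma mem_orthogonal_biSup {ι : Type*} {S : ι → Submodule 𝕜 E} {I : Set ι} {v : E}
    (h : ∀ i ∈ I, v ∈ (S i)ᗮ) : v ∈ (⨆ i ∈ I, S i)ᗮ := by
  rw [← iInf_orthogonal, mem_iInf]
  intro i
  by_cases hi : i ∈ I
  · rw [iSup_pos hi]; exact h i hi
  · rw [iSup_neg hi, bot_orthogonal_eq_top]; trivial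

lemma projC_biSup_comp {ι : Type*} (S : ι → Submodule 𝕜 E)
    (horth : ∀ i j, i ≠ j → ∀ u ∈ S i, ∀ v ∈ S j, ⟪u, v⟫ = 0)
    (I J : Set ι) (x : E) :
    projC (⨆ i ∈ I, S i) (projC (⨆ j ∈ J, S j) x) = projC (⨆ i ∈ I ∩ J, S i) x := by
  set MI := ⨆ i ∈ I, S i with hMI
  set MJ := ⨆ j ∈ J, S j with hMJ
  set MIJ := ⨆ i ∈ I ∩ J, S i with hMIJ
  have hIJI : MIJ ≤ MI := biSup_mono fun i hi => hi.1
  have hIJJ : MIJ ≤ MJ := biSup_mono fun i hi => hi.2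
  have hA : ∀ z ∈ MJ.topologicalClosure, projC MI z ∈ MIJ.topologicalClosure := by
    set T : Submodule 𝕜 E := MIJ.topologicalClosure.comap (projC MI : E →ₗ[𝕜] E) with hT
    have hTclosed : IsClosed (T : Set E) :=
      MIJ.isClosed_topologicalClosure.preimage (projC MI).continuous
    have hle : MJ ≤ T := by
      refine iSup₂_le fun j hj v hv => ?_
      by_cases hjI : j ∈ I
      · have h1 : projC MI v = v := projC_eq_self
          ((le_topologicalClosure _) ((le_iSup₂ (f := fun i (_ : i ∈ I) => S i) j hjI) hv))
        have h2 : v ∈ MIJ.topologicalClosure :=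
          (le_topologicalClosure _)
            ((le_iSup₂ (f := fun i (_ : i ∈ I ∩ J) => S i) j ⟨hjI, hj⟩) hv)
        simpa [hT, mem_comap, h1] using h2
      · have h0 : projC MI v = 0 := projC_eq_zero <| mem_orthogonal_biSup fun i hi => by
          rw [mem_orthogonal]
          intro u hu
          exact horth i j (fun e => hjI (e ▸ hi)) u hu v hv
        simp [hT, mem_comap, h0]
    intro z hz
    exact topologicalClosure_minimal _ hle hTclosed hz
  have hy : projC MI (projC MJ x) ∈ MIJ.topologicalClosure := hA _ (projC_mem _ _)
  refine (projC_eq hy ?_).symm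
  have hsplit : x - projC MI (projC MJ x)
      = (x - projC MJ x) + (projC MJ x - projC MI (projC MJ x)) := by abel
  rw [hsplit]
  exact add_mem (orthogonal_le hIJJ (sub_projC_mem _ _)) (orthogonal_le hIJI (sub_projC_mem _ _))

/-- For a well-founded poset `A` and a monotone family of closed subspaces
`(H_a)_{a ∈ A}` of a Hilbert space `E`, the family is decomposable if and only if it
satisfies the intersection property. -/
theorem decomposable_iff_intersectionProperty
    {A : Type*} [PartialOrder A]
    (hwf : WellFounded ((· < ·) : A → A → Prop))
    (H : A → Submodule 𝕜 E)
    (hclosed : ∀ a, IsClosed ((H a : Submodule 𝕜 E) : Set E))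
    (hmono : Monotone H) :
    Decomposable H ↔ IntersectionProperty H := by
  constructor
  · rintro ⟨S, -, horth, -, hspan⟩
    intro a b
    have hSH : ∀ c : A, S (c : WithTop A) ≤ H c := fun c => by
      rw [← hspan c]
      exact le_trans
        (le_iSup₂ (f := fun b (_ : b ∈ {b : A | b ≤ c}) => S (b : WithTop A)) c (le_refl c))
        (le_topologicalClosure _)
    have key : ∀ B : Set A, (∀ ⦃c d : A⦄, c ∈ B → d ≤ c → d ∈ B) →
        (⨆ c ∈ B, H c).topologicalClosure
          = (⨆ c ∈ B, S (c : WithTop A)).topologicalClosure := by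
      intro B hB
      apply le_antisymm
      · refine topologicalClosure_minimal _ ?_ (isClosed_topologicalClosure _)
        refine iSup₂_le fun c hc => ?_
        rw [← hspan c]
        refine le_trans (topologicalClosure_mono ?_) le_rfl
        exact iSup₂_le fun d hd =>
          le_iSup₂ (f := fun c (_ : c ∈ B) => S (c : WithTop A)) d (hB hc hd)
      · refine topologicalClosure_minimal _ ?_ (isClosed_topologicalClosure _)
        exact iSup₂_le fun c hc => le_trans (hSH c)
          (le_trans (le_iSup₂ (f := fun c (_ : c ∈ B) => H c) c hc) (le_topologicalClosure _))
    have hDa : ∀ e : A, piProj H {c | c ≤ e}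
        = projC (⨆ c ∈ {c : A | c ≤ e}, S (c : WithTop A)) :=
      fun e => projC_congr (key _ fun c d hc hd => le_trans hd hc)
    have hD : piProj H {c | c ≤ a ∧ c ≤ b}
        = projC (⨆ c ∈ {c : A | c ≤ a ∧ c ≤ b}, S (c : WithTop A)) :=
      projC_congr (key _ fun c d hc hd => ⟨le_trans hd hc.1, le_trans hd hc.2⟩)
    have him : ∀ B : Set A, (⨆ c ∈ B, S (c : WithTop A))
        = ⨆ t ∈ ((fun c : A => (c : WithTop A)) '' B), S t := fun B => (iSup_image).symm
    ext x
    rw [ContinuousLinearMap.comp_apply, hD, hDa a, hDa b, him, him, him]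
    rw [show ((fun c : A => (c : WithTop A)) '' {c | c ≤ a ∧ c ≤ b})
        = ((fun c : A => (c : WithTop A)) '' {c | c ≤ a})
          ∩ ((fun c : A => (c : WithTop A)) '' {c | c ≤ b}) by
      rw [← Set.image_inter WithTop.coe_injective]; rfl]
    exact (projC_biSup_comp S horth _ _ x).symm
  · intro hIP
    classical
    set S : WithTop A → Submodule 𝕜 E := fun t =>
      match t with
      | ⊤ => (⨆ a : A, H a)ᗮ
      | (a : A) => H a ⊓ (⨆ b ∈ {b : A | b < a}, H b)ᗮ
      with hSdef
    have hScoe : ∀ a : A, S (a : WithTop A) = H a ⊓ (⨆ b ∈ {b : A | b < a}, H b)ᗮ :=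
      fun a => rfl
    have hStop : S ⊤ = (⨆ a : A, H a)ᗮ := rfl
    -- H({c ≤ e}) = H e
    have fact1 : ∀ e : A, (⨆ c ∈ {c : A | c ≤ e}, H c).topologicalClosure = H e := by
      intro e
      apply le_antisymm
      · exact topologicalClosure_minimal _ (iSup₂_le fun c hc => hmono hc) (hclosed e)
      · exact le_trans (le_iSup₂ (f := fun c (_ : c ∈ {c : A | c ≤ e}) => H c) e le_rfl)
          (le_topologicalClosure _)
    have hfix : ∀ (e : A) (v : E), v ∈ H e → piProj H {c | c ≤ e} v = v := by
      intro e v hv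
      exact projC_eq_self (by rw [fact1 e]; exact hv)
    -- spanning, by well-founded induction
    have hspan : ∀ a : A,
        (⨆ b ∈ {b : A | b ≤ a}, S (b : WithTop A)).topologicalClosure = H a := by
      intro a
      induction a using hwf.induction with
      | _ a IH =>
        apply le_antisymm
        · refine topologicalClosure_minimal _ ?_ (hclosed a)
          exact iSup₂_le fun b hb => by rw [hScoe b]; exact le_trans inf_le_left (hmono hb)
        · intro x hx
          set M := ⨆ b ∈ {b : A | b < a}, H b with hM
          have hMH : M.topologicalClosure ≤ H a :=
            topologicalClosure_minimal _ (iSup₂_le fun b hb => hmono hb.le) (hclosed a)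
          have hz : x - projC M x ∈ S (a : WithTop A) := by
            rw [hScoe a]
            exact mem_inf.mpr ⟨sub_mem hx (hMH (projC_mem M x)), sub_projC_mem M x⟩
          have hzmem : x - projC M x
              ∈ (⨆ b ∈ {b : A | b ≤ a}, S (b : WithTop A)).topologicalClosure :=
            (le_topologicalClosure _)
              ((le_iSup₂ (f := fun b (_ : b ∈ {b : A | b ≤ a}) => S (b : WithTop A)) a le_rfl) hz)
          have hymem : projC M x
              ∈ (⨆ b ∈ {b : A | b ≤ a}, S (b : WithTop A)).topologicalClosure := by
            refine topologicalClosure_minimal _ ?_ (isClosed_topologicalClosure _)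
              (projC_mem M x)
            refine iSup₂_le fun b hb => ?_
            rw [← IH b hb]
            refine le_trans (topologicalClosure_mono ?_) le_rfl
            exact iSup₂_le fun c hc =>
              le_iSup₂ (f := fun b (_ : b ∈ {b : A | b ≤ a}) => S (b : WithTop A)) c
                (le_trans hc hb.le)
          have : x = projC M x + (x - projC M x) := by abel
          rw [this]
          exact add_mem hymem hzmem
    refine ⟨S, ?_, ?_, ?_, hspan⟩
    · intro t
      match t with
      | ⊤ => exact isClosed_orthogonal _
      | (a : A) =>
        rw [hScoe a, coe_inf]
        exact (hclosed a).inter (isClosed_orthogonal _)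
    · intro t s hts u hu v hv
      match t, s with
      | ⊤, ⊤ => exact absurd rfl hts
      | ⊤, (b : A) =>
        rw [hStop] at hu
        exact (mem_orthogonal' _ u).mp hu v
          (le_iSup H b ((inf_le_left : _ ≤ H b) ((hScoe b) ▸ hv)))
      | (a : A), ⊤ =>
        rw [hStop] at hv
        exact (mem_orthogonal _ v).mp hv u
          (le_iSup H a ((inf_le_left : _ ≤ H a) ((hScoe a) ▸ hu)))
      | (a : A), (b : A) =>
        rw [hScoe a] at hu
        rw [hScoe b] at hv
        have hab : a ≠ b := fun e => hts (by rw [e])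
        obtain ⟨huH, huO⟩ := mem_inf.mp hu
        obtain ⟨hvH, hvO⟩ := mem_inf.mp hv
        by_cases h1 : a < b
        · exact (mem_orthogonal _ v).mp hvO u
            ((le_iSup₂ (f := fun c (_ : c ∈ {c : A | c < b}) => H c) a h1) huH)
        by_cases h2 : b < a
        · exact (mem_orthogonal' _ u).mp huO v
            ((le_iSup₂ (f := fun c (_ : c ∈ {c : A | c < a}) => H c) b h2) hvH)
        -- incomparable
        set w := piProj H {c | c ≤ a ∧ c ≤ b} v with hw
        have hw1 : ⟪u, w⟫ = 0 := by
          have hsub : (⨆ c ∈ {c : A | c ≤ a ∧ c ≤ b}, H c)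
              ≤ ⨆ c ∈ {c : A | c < a}, H c := by
            refine biSup_mono fun c hc => ?_
            refine lt_of_le_of_ne hc.1 fun e => ?_
            exact h1 (lt_of_le_of_ne (e ▸ hc.2) hab)
          have hwmem : w ∈ (⨆ c ∈ {c : A | c < a}, H c).topologicalClosure :=
            topologicalClosure_mono hsub (projC_mem _ v)
          have huO' : u ∈ (⨆ c ∈ {c : A | c < a}, H c).topologicalClosureᗮ := by
            rw [orthogonal_topClosure]; exact huO
          exact (mem_orthogonal' _ u).mp huO' w hwmem
        have hw2 : ⟪u, v - w⟫ = 0 := by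
          have hveq : w = piProj H {c | c ≤ a} v := by
            rw [hIP a b] at hw
            rw [hw, ContinuousLinearMap.comp_apply, hfix b v hvH]
          have hvw : v - w ∈ (⨆ c ∈ {c : A | c ≤ a}, H c)ᗮ := by
            rw [hveq]; exact sub_projC_mem _ v
          exact (mem_orthogonal _ (v - w)).mp hvw u
            ((le_iSup₂ (f := fun c (_ : c ∈ {c : A | c ≤ a}) => H c) a le_rfl) huH)
        have : v = w + (v - w) := by abel
        rw [this, inner_add_right, hw1, hw2, add_zero]
    · -- totality
      set K := (⨆ a : A, H a) with hK
      haveI : CompleteSpace K.topologicalClosure :=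
        K.isClosed_topologicalClosure.completeSpace_coe
      refine le_antisymm le_top ?_
      rw [← Submodule.sup_orthogonal_of_hasOrthogonalProjection (K := K.topologicalClosure)]
      refine sup_le ?_ ?_
      · refine topologicalClosure_minimal _ ?_ (isClosed_topologicalClosure _)
        refine iSup_le fun a => ?_
        rw [← hspan a]
        refine le_trans (topologicalClosure_mono ?_) le_rfl
        exact iSup₂_le fun b _ => le_iSup S (b : WithTop A)
      · rw [orthogonal_topClosure, ← hStop]
        exact le_trans (le_iSup S ⊤) (le_topologicalClosure _)
end

section
/- Let A be a well-founded meet semilattice, H a Hilbert space, and (H_a)_{a∈A} a monotone family of closed subspaces of H with π_a the orthogonal projection of H onto H_a. If π_a ∘ π_b = π_{a∧b} for all a, b ∈ A, then (H_a)_{a∈A} is decomposable. -/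
open Submodule

variable {𝕜 E : Type*} [RCLike 𝕜] [NormedAddCommGroup E] [InnerProductSpace 𝕜 E]
  [CompleteSpace E]

namespace DecompAux
set_option linter.unusedSectionVars false

lemma projC_mem (K : Submodule 𝕜 E) (x : E) : projC K x ∈ K.topologicalClosure := by
  haveI : CompleteSpace K.topologicalClosure :=
    K.isClosed_topologicalClosure.completeSpace_coe
  exact (orthogonalProjection K.topologicalClosure x).2

lemma projC_eq_self (K : Submodule 𝕜 E) {x : E} (hx : x ∈ K.topologicalClosure) :
    projC K x = x := by
  haveI : CompleteSpace K.topologicalClosure :=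
    K.isClosed_topologicalClosure.completeSpace_coe
  exact Submodule.starProjection_eq_self_iff.2 hx

lemma inner_projC (K : Submodule 𝕜 E) (u v : E) :
    (inner 𝕜 (projC K u) v : 𝕜) = inner 𝕜 u (projC K v) := by
  haveI : CompleteSpace K.topologicalClosure :=
    K.isClosed_topologicalClosure.completeSpace_coe
  exact Submodule.inner_starProjection_left_eq_right K.topologicalClosure u v

lemma orthogonal_closure (K : Submodule 𝕜 E) : K.topologicalClosureᗮ = Kᗮ := by
  rw [← K.orthogonal_orthogonal_eq_closure, Submodule.triorthogonal_eq_orthogonal]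

lemma mem_orthogonal_iSup {ι : Sort*} (K : ι → Submodule 𝕜 E) {v : E}
    (h : ∀ i, v ∈ (K i)ᗮ) : v ∈ (⨆ i, K i)ᗮ := by
  have h2 : (⨆ i, K i) ≤ (𝕜 ∙ v)ᗮ := by
    refine iSup_le fun i => fun u hu => ?_
    rw [Submodule.mem_orthogonal_singleton_iff_inner_right]
    exact Submodule.inner_left_of_mem_orthogonal hu (h i)
  rw [Submodule.mem_orthogonal]
  intro u hu
  have := h2 hu
  rw [Submodule.mem_orthogonal_singleton_iff_inner_right] at this
  rwa [inner_eq_zero_symm]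

variable {A : Type*} [SemilatticeInf A]

/-- The closed span of the subspaces strictly below `a`. -/
noncomputable def Pa (H : A → Submodule 𝕜 E) (a : A) : Submodule 𝕜 E :=
  ⨆ b ∈ {b : A | b < a}, H b

/-- The decomposing family. -/
noncomputable def Sa (H : A → Submodule 𝕜 E) : WithTop A → Submodule 𝕜 E
  | ⊤ => (⨆ b, H b)ᗮ
  | (a : A) => H a ⊓ (Pa H a)ᗮ

lemma Sa_coe (H : A → Submodule 𝕜 E) (a : A) :
    Sa H (a : WithTop A) = H a ⊓ (Pa H a)ᗮ := rfl

lemma Sa_top (H : A → Submodule 𝕜 E) : Sa H ⊤ = (⨆ b, H b)ᗮ := rfl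

/-- Key orthogonality computation. -/
lemma key (H : A → Submodule 𝕜 E)
    (hclosed : ∀ a, IsClosed ((H a : Submodule 𝕜 E) : Set E))
    (hproj : ∀ a b : A, (projC (H a)).comp (projC (H b)) = projC (H (a ⊓ b)))
    {a b : A} (hab : a ⊓ b < b) {u v : E} (hu : u ∈ H a)
    (hv : v ∈ Sa H (b : WithTop A)) : (inner 𝕜 u v : 𝕜) = 0 := by
  rw [Sa_coe] at hv
  have hHb : (H b).topologicalClosure = H b := (hclosed b).submodule_topologicalClosure_eq
  have hHc : (H (b ⊓ a)).topologicalClosure = H (b ⊓ a) :=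
    (hclosed _).submodule_topologicalClosure_eq
  have hv1 : v ∈ (H b).topologicalClosure := by rw [hHb]; exact hv.1
  have h1 : (inner 𝕜 u v : 𝕜) = inner 𝕜 u (projC (H b) v) := by
    rw [projC_eq_self (H b) hv1]
  have h2 : (inner 𝕜 u (projC (H b) v) : 𝕜) = inner 𝕜 (projC (H b) u) v :=
    (inner_projC (H b) u v).symm
  have hu1 : projC (H b) u = projC (H (b ⊓ a)) u := by
    have := congrArg (fun f : E →L[𝕜] E => f u) (hproj b a)
    simp only [ContinuousLinearMap.comp_apply] at this
    rw [← this, projC_eq_self (H a) (by rwa [(hclosed a).submodule_topologicalClosure_eq])]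
  have hmem : projC (H (b ⊓ a)) u ∈ Pa H b := by
    have : projC (H (b ⊓ a)) u ∈ H (b ⊓ a) := by
      have := projC_mem (H (b ⊓ a)) u; rwa [hHc] at this
    have hlt : b ⊓ a ∈ {b' : A | b' < b} := by rwa [inf_comm] at hab
    exact le_biSup H hlt this
  rw [h1, h2, hu1]
  exact hv.2 _ hmem

/-- The main well-founded induction: the partial closed spans recover `H a`. -/
lemma main (H : A → Submodule 𝕜 E)
    (hwf : WellFounded ((· < ·) : A → A → Prop))
    (hclosed : ∀ a, IsClosed ((H a : Submodule 𝕜 E) : Set E))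
    (hmono : Monotone H) (a : A) :
    (⨆ b ∈ {b : A | b ≤ a}, Sa H (b : WithTop A)).topologicalClosure = H a := by
  induction a using hwf.induction with
  | _ a ih =>
  set N : Submodule 𝕜 E := ⨆ b ∈ {b : A | b ≤ a}, Sa H (b : WithTop A) with hN
  have hNle : N ≤ H a := by
    refine iSup₂_le fun b hb => ?_
    rw [Sa_coe]
    exact le_trans inf_le_left (hmono hb)
  refine le_antisymm (Submodule.topologicalClosure_minimal _ hNle (hclosed a)) ?_
  -- the strict part is below the closure of N, by induction
  have hPle : Pa H a ≤ N.topologicalClosure := by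
    refine iSup₂_le fun b hb => ?_
    rw [← ih b hb]
    refine Submodule.topologicalClosure_mono ?_
    refine iSup₂_le fun c hc => ?_
    exact le_biSup (fun d : A => Sa H (d : WithTop A))
      (show c ∈ {d : A | d ≤ a} from le_trans hc hb.le)
  -- now decompose any `x ∈ H a`
  intro x hx
  haveI : CompleteSpace (Pa H a).topologicalClosure :=
    (Pa H a).isClosed_topologicalClosure.completeSpace_coe
  have hPHa : (Pa H a).topologicalClosure ≤ H a := by
    refine Submodule.topologicalClosure_minimal _ ?_ (hclosed a)
    exact iSup₂_le fun b hb => hmono hb.le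
  have hy : x - projC (Pa H a) x ∈ Sa H (a : WithTop A) := by
    rw [Sa_coe]
    constructor
    · exact Submodule.sub_mem _ hx (hPHa (projC_mem _ x))
    · have : x - projC (Pa H a) x ∈ ((Pa H a).topologicalClosure)ᗮ :=
        Submodule.sub_starProjection_mem_orthogonal (K := (Pa H a).topologicalClosure) x
      rwa [orthogonal_closure] at this
  have hclN : Pa H a ≤ N.topologicalClosure := hPle
  have hx' : x = projC (Pa H a) x + (x - projC (Pa H a) x) := by abel
  rw [hx']
  refine Submodule.add_mem _ ?_ ?_
  · exact Submodule.topologicalClosure_minimal _ hPle N.isClosed_topologicalClosure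
      (projC_mem _ x)
  · exact Submodule.le_topologicalClosure N
      (le_biSup (fun b : A => Sa H (b : WithTop A))
        (show a ∈ {b : A | b ≤ a} from le_refl a) hy)

end DecompAux

/-- Let `A` be a well-founded meet semilattice and `(H_a)_{a ∈ A}` a
monotone family of closed subspaces of a Hilbert space, with `π_a` the orthogonal
projection onto `H_a`.  If `π_a ∘ π_b = π_{a ⊓ b}` for all `a, b`, then the family is
decomposable. -/
theorem decomposable_of_proj_inf
    {A : Type*} [SemilatticeInf A]
    (hwf : WellFounded ((· < ·) : A → A → Prop))
    (H : A → Submodule 𝕜 E)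
    (hclosed : ∀ a, IsClosed ((H a : Submodule 𝕜 E) : Set E))
    (hmono : Monotone H)
    (hproj : ∀ a b : A, (projC (H a)).comp (projC (H b)) = projC (H (a ⊓ b))) :
    Decomposable H := by
  classical
  refine ⟨DecompAux.Sa H, ?_, ?_, ?_, DecompAux.main H hwf hclosed hmono⟩
  · intro a
    induction a using WithTop.recTopCoe with
    | top => exact (Submodule.isClosed_orthogonal _)
    | coe a =>
      rw [DecompAux.Sa_coe]
      exact IsClosed.inter (hclosed a) (Submodule.isClosed_orthogonal _)
  · intro a b hab u hu v hv
    induction a using WithTop.recTopCoe with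
    | top =>
      rw [DecompAux.Sa_top] at hu
      induction b using WithTop.recTopCoe with
      | top => exact absurd rfl hab
      | coe b =>
        have hvH : v ∈ ⨆ c, H c := le_iSup H b (by
          rw [DecompAux.Sa_coe] at hv; exact hv.1)
        exact (Submodule.mem_orthogonal' _ u).1 hu v hvH
    | coe a =>
      induction b using WithTop.recTopCoe with
      | top =>
        rw [DecompAux.Sa_top] at hv
        have huH : u ∈ ⨆ c, H c := le_iSup H a (by
          rw [DecompAux.Sa_coe] at hu; exact hu.1)
        exact (Submodule.mem_orthogonal _ v).1 hv u huH
      | coe b =>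
        have hab' : a ≠ b := fun h => hab (by rw [h])
        rcases lt_or_eq_of_le (inf_le_right : a ⊓ b ≤ b) with hlt | heq
        · exact DecompAux.key H hclosed hproj hlt
            (by rw [DecompAux.Sa_coe] at hu; exact hu.1) hv
        · have hble : b ≤ a := heq ▸ inf_le_left
          have hba : b ⊓ a < a := by
            rw [inf_eq_left.2 hble]
            exact lt_of_le_of_ne hble (fun h => hab (by rw [h]))
          have : (inner 𝕜 v u : 𝕜) = 0 :=
            DecompAux.key H hclosed hproj hba
              (by rw [DecompAux.Sa_coe] at hv; exact hv.1) hu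
          rw [← inner_conj_symm, this, map_zero]
  · rw [Submodule.topologicalClosure_eq_top_iff, Submodule.eq_bot_iff]
    intro v hv
    have hv' : ∀ x : WithTop A, v ∈ (DecompAux.Sa H x)ᗮ :=
      fun x => Submodule.orthogonal_le (le_iSup _ x) hv
    have hHa : ∀ a : A, v ∈ (H a)ᗮ := by
      intro a
      rw [← DecompAux.main H hwf hclosed hmono a, DecompAux.orthogonal_closure]
      exact DecompAux.mem_orthogonal_iSup _ fun b =>
        DecompAux.mem_orthogonal_iSup _ fun _ => hv' _
    have hvtop : v ∈ DecompAux.Sa H ⊤ := by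
      rw [DecompAux.Sa_top]
      exact DecompAux.mem_orthogonal_iSup _ hHa
    have := Submodule.inner_right_of_mem_orthogonal hvtop (hv' ⊤)
    rwa [inner_self_eq_zero] at this
end

section
/- Let A be any poset, H a Hilbert space, and (H_a)_{a∈A} a decomposable monotone family of closed subspaces of H with decomposition (S'_a)_{a∈A⁺}. Then for every a ∈ A⁺, S'_a = H_a ∩ ⋂_{b∈A⁺, b<a} H_b^⊥. In particular a decomposable family has a unique decomposition. -/
open Submodule

variable {𝕜 E : Type*} [RCLike 𝕜] [NormedAddCommGroup E] [InnerProductSpace 𝕜 E]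
  [CompleteSpace E]

/-- The extension of the family `(H_a)_{a ∈ A}` to `A⁺ = WithTop A`, sending the added
greatest element `⊤` to the whole space. -/
def extFam {A : Type*} [PartialOrder A] (H : A → Submodule 𝕜 E) :
    WithTop A → Submodule 𝕜 E :=
  fun x => WithTop.recTopCoe ⊤ H x

/-- Orthogonal complement of a topological closure. -/
lemma orth_topologicalClosure (K : Submodule 𝕜 E) :
    (K.topologicalClosure)ᗮ = Kᗮ := by
  rw [← K.orthogonal_orthogonal_eq_closure, Submodule.triorthogonal_eq_orthogonal]

/-- If `(S'_a)_{a ∈ A⁺}` is a decomposition of the monotone family of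
closed subspaces `(H_a)_{a ∈ A}`, then necessarily
`S'_a = H_a ∩ ⋂_{b ∈ A⁺, b < a} H_b^⊥` for every `a ∈ A⁺`; in particular the
decomposition is unique. -/
theorem decomposition_unique
    {A : Type*} [PartialOrder A]
    (H : A → Submodule 𝕜 E)
    (hclosed : ∀ a, IsClosed ((H a : Submodule 𝕜 E) : Set E))
    (hmono : Monotone H)
    (S' : WithTop A → Submodule 𝕜 E)
    (hS'closed : ∀ a, IsClosed ((S' a : Submodule 𝕜 E) : Set E))
    (hS'orth : ∀ a b, a ≠ b → ∀ u ∈ S' a, ∀ v ∈ S' b, (inner 𝕜 u v : 𝕜) = 0)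
    (hS'top : (⨆ a, S' a).topologicalClosure = ⊤)
    (hS'dec : ∀ a : A,
      (⨆ b ∈ {b : A | b ≤ a}, S' (b : WithTop A)).topologicalClosure = H a) :
    ∀ a : WithTop A,
      S' a = extFam H a ⊓ ⨅ b ∈ {b : WithTop A | b < a}, (extFam H b)ᗮ := by
  -- orthogonal complement of `H b` as an infimum
  have horthH : ∀ b : A, (H b)ᗮ = ⨅ c ∈ {c : A | c ≤ b}, (S' (c : WithTop A))ᗮ := by
    intro b
    rw [← hS'dec b, orth_topologicalClosure]
    simp_rw [iSup_subtype', iInf_subtype', Submodule.iInf_orthogonal]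
  -- membership: v ∈ (H b)ᗮ iff v ⊥ S' c for all c ≤ b
  have hmemH : ∀ (b : A) (v : E), v ∈ (H b)ᗮ ↔
      ∀ c : A, c ≤ b → v ∈ (S' (c : WithTop A))ᗮ := by
    intro b v
    rw [horthH b]
    simp [Submodule.mem_iInf]
  -- S' c ≤ H b when c ≤ b
  have hSle : ∀ c b : A, c ≤ b → S' (c : WithTop A) ≤ H b := by
    intro c b hcb
    rw [← hS'dec b]
    exact le_trans (le_iSup₂ (f := fun c (_ : c ∈ {c : A | c ≤ b}) => S' (c : WithTop A))
      c hcb) (Submodule.le_topologicalClosure _)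
  -- orthogonality of distinct pieces, stated via `ᗮ`
  have horth : ∀ c d : WithTop A, c ≠ d → S' c ≤ (S' d)ᗮ := by
    intro c d hcd u hu
    rw [Submodule.mem_orthogonal]
    intro x hx
    exact hS'orth d c (Ne.symm hcd) x hx u hu
  intro a
  apply le_antisymm
  · -- forward inclusion
    refine le_inf ?_ ?_
    · cases a with
      | top => exact le_top
      | coe a => exact hSle a a le_rfl
    · refine le_iInf₂ fun b hb => ?_
      simp only [Set.mem_setOf_eq] at hb
      cases b with
      | top => exact absurd hb (not_top_lt)
      | coe b =>
        show S' a ≤ (H b)ᗮ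
        intro u hu
        rw [hmemH]
        intro c hcb
        have hne : (c : WithTop A) ≠ a := by
          intro h
          rw [← h] at hb
          exact absurd (lt_of_le_of_lt (WithTop.coe_le_coe.2 hcb) hb) (lt_irrefl _)
        exact horth a c (Ne.symm hne) hu
  · -- reverse inclusion
    intro v hv
    obtain ⟨hv1, hv2⟩ := Submodule.mem_inf.1 hv
    simp only [Submodule.mem_iInf, Set.mem_setOf_eq] at hv2
    -- v is orthogonal to S' c for every c ≠ a
    have hvorth : ∀ c : WithTop A, c ≠ a → v ∈ (S' c)ᗮ := by
      intro c hc
      cases a with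
      | top =>
        -- c < ⊤, so c = coe c'
        cases c with
        | top => exact absurd rfl hc
        | coe c =>
          have := hv2 (c : WithTop A) (WithTop.coe_lt_top c)
          exact Submodule.orthogonal_le (hSle c c le_rfl) this
      | coe a =>
        cases c with
        | top =>
          -- v ∈ H a, and S' ⊤ ⊥ H a
          rw [Submodule.mem_orthogonal]
          intro u hu
          have : u ∈ (H a)ᗮ := by
            rw [hmemH]
            intro d hd
            exact horth ⊤ d (by simp) hu
          exact Submodule.inner_left_of_mem_orthogonal hv1 this
        | coe c =>
          by_cases hca : c ≤ a
          · have hlt : (c : WithTop A) < (a : WithTop A) := by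
              refine lt_of_le_of_ne (WithTop.coe_le_coe.2 hca) hc
            have := hv2 (c : WithTop A) hlt
            exact Submodule.orthogonal_le (hSle c c le_rfl) this
          · -- S' c ⊥ H a since c ≰ a
            rw [Submodule.mem_orthogonal]
            intro u hu
            have : u ∈ (H a)ᗮ := by
              rw [hmemH]
              intro d hd
              refine horth (c : WithTop A) (d : WithTop A) ?_ hu
              intro h
              exact hca (le_trans (le_of_eq (WithTop.coe_injective h)) hd)
            exact Submodule.inner_left_of_mem_orthogonal hv1 this
    -- decompose v over S' a
    haveI : CompleteSpace (S' a) := (hS'closed a).completeSpace_coe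
    obtain ⟨p, hp, q, hq, hpq⟩ := (S' a).exists_add_mem_mem_orthogonal v
    -- q is orthogonal to everything
    have hq' : q ∈ (⨆ c, S' c)ᗮ := by
      rw [← Submodule.iInf_orthogonal, Submodule.mem_iInf]
      intro c
      by_cases hc : c = a
      · rw [hc]; exact hq
      · have hv' := hvorth c hc
        have hp' : p ∈ (S' c)ᗮ := horth a c (Ne.symm hc) hp
        have : q = v - p := by rw [hpq]; abel
        rw [this]
        exact Submodule.sub_mem _ hv' hp'
    have : (⨆ c, S' c)ᗮ = ⊥ := Submodule.topologicalClosure_eq_top_iff.1 hS'top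
    rw [this, Submodule.mem_bot] at hq'
    rw [hpq, hq', add_zero]
    exact hp
end

section
/- Let I be a finite set and (E_i)_{i∈I} a family of finite sets; equip ℝ^{E} with the inner product ⟨f, g⟩ = Σ_{x∈E} f(x)g(x), where E = Π_{i∈I} E_i. Then there exists a family (S_a)_{a⊆I} of pairwise orthogonal subspaces of ℝ^E such that ℝ^E = ⊕_{a⊆I} S_a and, for every lower set 𝒜 of subsets of I (i.e. b ⊆ a ∈ 𝒜 implies b ∈ 𝒜), the hierarchical model subspace H_𝒜 := Σ_{a∈𝒜} V_a satisfies H_𝒜 = ⊕_{a∈𝒜} S_a. -/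
open Submodule

variable {I : Type*} [Fintype I] [DecidableEq I] {Ei : I → Type*} [∀ i, Fintype (Ei i)]

/-- The factor subspace `V_a` of functions on `E = Π i, E_i` (with the standard inner
product `⟨f, g⟩ = Σ_x f x * g x`, i.e. in `EuclideanSpace ℝ (Π i, E_i)`) which depend
only on the coordinates in `a`. -/
def factorSub (a : Set I) : Submodule ℝ (EuclideanSpace ℝ (∀ i, Ei i)) where
  carrier := {f | ∀ x y : (∀ i, Ei i), (∀ i ∈ a, x i = y i) → f x = f y}
  add_mem' := by
    intro f g hf hg x y h
    simp only [PiLp.add_apply, hf x y h, hg x y h]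
  zero_mem' := by intro x y h; rfl
  smul_mem' := by
    intro c f hf x y h
    simp only [PiLp.smul_apply, hf x y h]

lemma mem_factorSub {a : Set I} {f : EuclideanSpace ℝ (∀ i, Ei i)} :
    f ∈ factorSub a ↔ ∀ x y : (∀ i, Ei i), (∀ i ∈ a, x i = y i) → f x = f y := Iff.rfl

lemma factorSub_mono {a b : Set I} (h : a ⊆ b) :
    (factorSub a : Submodule ℝ (EuclideanSpace ℝ (∀ i, Ei i))) ≤ factorSub b :=
  fun _f hf x y hxy => hf x y fun i hi => hxy i (h hi)

open Classical in
/-- Combine `x` on coordinates in `a` with `y` off `a`. -/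
noncomputable def comb (a : Set I) (x y : ∀ i, Ei i) : ∀ i, Ei i :=
  fun i => if i ∈ a then x i else y i

/-- Averaging over coordinates outside `a` (the orthogonal projection onto `V_a`,
as a plain function). -/
noncomputable def avg (a : Set I) (f : EuclideanSpace ℝ (∀ i, Ei i)) :
    EuclideanSpace ℝ (∀ i, Ei i) :=
  WithLp.toLp 2 fun x => (Fintype.card (∀ i, Ei i) : ℝ)⁻¹ * ∑ y, f (comb a x y)

lemma avg_eq_of_mem {a : Set I} {f : EuclideanSpace ℝ (∀ i, Ei i)}
    (hf : f ∈ factorSub a) : avg a f = f := by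
  refine WithLp.ofLp_injective 2 (funext fun x => ?_)
  have h1 : ∀ y, f (comb a x y) = f x := fun y =>
    hf _ _ (fun i hi => by simp [comb, hi])
  have hpos : (0 : ℕ) < Fintype.card (∀ i, Ei i) := Fintype.card_pos_iff.mpr ⟨x⟩
  simp only [avg, WithLp.ofLp_toLp, h1, Finset.sum_const, Finset.card_univ, nsmul_eq_mul]
  rw [← mul_assoc, inv_mul_cancel₀ (by exact_mod_cast hpos.ne'), one_mul]

lemma avg_mem_inter {a b : Set I} {f : EuclideanSpace ℝ (∀ i, Ei i)}
    (hf : f ∈ factorSub b) : avg a f ∈ factorSub (a ∩ b) := by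
  intro x x' h
  show (_ : ℝ) = _
  simp only [avg, WithLp.ofLp_toLp]
  congr 1
  refine Finset.sum_congr rfl fun y _ => ?_
  refine hf _ _ fun i hi => ?_
  by_cases hia : i ∈ a
  · simpa [comb, hia] using h i ⟨hia, hi⟩
  · simp [comb, hia]

lemma inner_avg (a : Set I) (f g : EuclideanSpace ℝ (∀ i, Ei i)) :
    (inner ℝ (avg a f) g : ℝ) = inner ℝ f (avg a g) := by
  classical
  have hinv : Function.Involutive
      (fun p : (∀ i, Ei i) × (∀ i, Ei i) => (comb a p.1 p.2, comb a p.2 p.1)) := by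
    rintro ⟨x, y⟩
    simp only [Prod.mk.injEq]
    constructor <;> · funext i; by_cases h : i ∈ a <;> simp [comb, h]
  have key : (∑ x, ∑ y, f (comb a x y) * g x) = ∑ x, ∑ y, f x * g (comb a x y) := by
    rw [← Fintype.sum_prod_type (f := fun p : (∀ i, Ei i) × (∀ i, Ei i) =>
          f (comb a p.1 p.2) * g p.1),
        ← Fintype.sum_prod_type (f := fun p : (∀ i, Ei i) × (∀ i, Ei i) =>
          f p.1 * g (comb a p.1 p.2))]
    refine Fintype.sum_equiv hinv.toPerm _ _ fun p => ?_
    have h1 : comb a (comb a p.1 p.2) (comb a p.2 p.1) = p.1 :=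
      congrArg Prod.fst (hinv p)
    show f (comb a p.1 p.2) * g p.1 =
      f (comb a p.1 p.2) * g (comb a (comb a p.1 p.2) (comb a p.2 p.1))
    rw [h1]
  simp only [PiLp.inner_apply, RCLike.inner_apply', conj_trivial]
  have L : ∀ x, (avg a f x) * g x
      = (Fintype.card (∀ i, Ei i) : ℝ)⁻¹ * ∑ y, f (comb a x y) * g x := fun x => by
    show ((Fintype.card (∀ i, Ei i) : ℝ)⁻¹ * ∑ y, f (comb a x y)) * g x = _
    rw [mul_assoc, Finset.sum_mul]
  have R : ∀ x, f x * (avg a g x)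
      = (Fintype.card (∀ i, Ei i) : ℝ)⁻¹ * ∑ y, f x * g (comb a x y) := fun x => by
    show f x * ((Fintype.card (∀ i, Ei i) : ℝ)⁻¹ * ∑ y, g (comb a x y)) = _
    rw [mul_left_comm, Finset.mul_sum]
  simp only [L, R, ← Finset.mul_sum, key]

/-- The span of the factor subspaces strictly below `a`. -/
noncomputable def Kspace (a : Set I) : Submodule ℝ (EuclideanSpace ℝ (∀ i, Ei i)) :=
  ⨆ (b : Set I) (_ : b ⊂ a), factorSub b

/-- The interaction subspace. -/
noncomputable def Sspace (a : Set I) : Submodule ℝ (EuclideanSpace ℝ (∀ i, Ei i)) :=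
  factorSub a ⊓ (Kspace a)ᗮ

lemma Kspace_le (a : Set I) :
    (Kspace a : Submodule ℝ (EuclideanSpace ℝ (∀ i, Ei i))) ≤ factorSub a :=
  iSup₂_le fun _b hb => factorSub_mono hb.subset

lemma orth_aux {a b : Set I} (hab : ¬ a ⊆ b) {u v : EuclideanSpace ℝ (∀ i, Ei i)}
    (hu : u ∈ Sspace a) (hv : v ∈ Sspace b) : (inner ℝ u v : ℝ) = 0 := by
  obtain ⟨hu1, hu2⟩ := hu
  obtain ⟨hv1, _⟩ := hv
  have h3 : a ∩ b ⊂ a := by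
    refine Set.inter_subset_left.ssubset_of_ne fun h => hab ?_
    rw [← h]; exact Set.inter_subset_right
  have h4 : avg a v ∈ Kspace (Ei := Ei) a :=
    le_iSup₂ (f := fun (b : Set I) (_ : b ⊂ a) =>
      (factorSub b : Submodule ℝ (EuclideanSpace ℝ (∀ i, Ei i)))) (a ∩ b) h3
      (avg_mem_inter hv1)
  calc (inner ℝ u v : ℝ) = inner ℝ (avg a u) v := by rw [avg_eq_of_mem hu1]
    _ = inner ℝ u (avg a v) := inner_avg a u v
    _ = 0 := (Submodule.mem_orthogonal' _ _).mp hu2 _ h4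

lemma factorSub_le_sup (a : Set I) :
    (factorSub a : Submodule ℝ (EuclideanSpace ℝ (∀ i, Ei i))) ≤
      ⨆ (b : Set I) (_ : b ⊆ a), Sspace b := by
  induction a using WellFoundedLT.induction with
  | _ a IH =>
    intro f hf
    set K := Kspace (Ei := Ei) a with hK
    set p : EuclideanSpace ℝ (∀ i, Ei i) := (↑(orthogonalProjection K f) : EuclideanSpace ℝ (∀ i, Ei i)) with hp
    have hpK : p ∈ K := coe_mem _
    have h1 : f - p ∈ Sspace a :=
      ⟨sub_mem hf (Kspace_le a hpK), K.sub_starProjection_mem_orthogonal f⟩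
    have h2 : p ∈ ⨆ (b : Set I) (_ : b ⊆ a), Sspace (Ei := Ei) b := by
      have hle : K ≤ ⨆ (b : Set I) (_ : b ⊆ a), Sspace (Ei := Ei) b := by
        refine iSup₂_le fun b hb => (IH b hb).trans ?_
        exact iSup₂_le fun c hc =>
          le_iSup₂ (f := fun (b : Set I) (_ : b ⊆ a) => Sspace (Ei := Ei) b) c
            (hc.trans hb.subset)
      exact hle hpK
    have hsplit : f = (f - p) + p := (sub_add_cancel f p).symm
    rw [hsplit]
    exact add_mem
      (le_iSup₂ (f := fun (b : Set I) (_ : b ⊆ a) => Sspace (Ei := Ei) b) a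
        (subset_refl a) h1) h2

/-- **decomposition into interaction subspaces.** There is a family
`(S_a)_{a ⊆ I}` of pairwise orthogonal subspaces of `ℝ^E` with `ℝ^E = ⊕_{a ⊆ I} S_a`
such that every hierarchical model subspace `H_𝒜 = Σ_{a ∈ 𝒜} V_a` over a lower set `𝒜`
satisfies `H_𝒜 = ⊕_{a ∈ 𝒜} S_a`. -/
theorem exists_interaction_decomposition :
    ∃ S : Set I → Submodule ℝ (EuclideanSpace ℝ (∀ i, Ei i)),
      (∀ a b : Set I, a ≠ b → ∀ u ∈ S a, ∀ v ∈ S b, (inner ℝ u v : ℝ) = 0) ∧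
      (⨆ a : Set I, S a) = ⊤ ∧
      ∀ 𝒜 : Set (Set I), (∀ a ∈ 𝒜, ∀ b : Set I, b ⊆ a → b ∈ 𝒜) →
        (⨆ a ∈ 𝒜, (factorSub a : Submodule ℝ (EuclideanSpace ℝ (∀ i, Ei i)))) =
          ⨆ a ∈ 𝒜, S a := by
  refine ⟨Sspace, ?_, ?_, ?_⟩
  · intro a b hne u hu v hv
    by_cases h : a ⊆ b
    · have hba : ¬ b ⊆ a := fun h' => hne (subset_antisymm h h')
      rw [real_inner_comm]
      exact orth_aux hba hv hu
    · exact orth_aux h hu hv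
  · rw [eq_top_iff]
    intro f _
    have hf : f ∈ factorSub (Ei := Ei) Set.univ := fun x y h => by
      have hxy : x = y := funext fun i => h i trivial
      rw [hxy]
    have h1 := factorSub_le_sup Set.univ hf
    have h2 : (⨆ (b : Set I) (_ : b ⊆ Set.univ), Sspace (Ei := Ei) b) ≤
        ⨆ a : Set I, Sspace (Ei := Ei) a :=
      iSup₂_le fun b _ => le_iSup _ b
    exact h2 h1
  · intro 𝒜 h𝒜
    apply le_antisymm
    · refine iSup₂_le fun a ha => (factorSub_le_sup a).trans ?_
      exact iSup₂_le fun b hb =>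
        le_iSup₂ (f := fun (a : Set I) (_ : a ∈ 𝒜) => Sspace (Ei := Ei) a) b
          (h𝒜 a ha b hb)
    · refine iSup₂_le fun a ha => ?_
      exact le_trans inf_le_left
        (le_iSup₂ (f := fun (a : Set I) (_ : a ∈ 𝒜) =>
          (factorSub a : Submodule ℝ (EuclideanSpace ℝ (∀ i, Ei i)))) a ha)
end

section
/- Let E and F be Hilbert spaces over 𝕜 (𝕜 = ℝ or ℂ) and f : E → F a continuous linear map. Then f is an epimorphism in the category of Hilbert spaces and continuous linear maps — that is, for every Hilbert space G over 𝕜 and every pair of continuous linear maps g, h : F → G, g ∘ f = h ∘ f implies g = h — if and only if f has dense range. -/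
noncomputable section SmallModel
universe u
variable (𝕜 : Type*) [RCLike 𝕜]

instance small_rclike : Small.{u} 𝕜 := by
  have e := (Module.finBasis ℝ 𝕜).equivFun.toEquiv
  exact small_of_injective (β := Fin (Module.finrank ℝ 𝕜) → ℝ) e.injective

/-- The small model of `𝕜` in universe `u`. -/
def SmallK : Type u := Shrink.{u} 𝕜

instance : AddCommGroup (SmallK.{u} 𝕜) := inferInstanceAs (AddCommGroup (Shrink 𝕜))
instance : Module 𝕜 (SmallK.{u} 𝕜) := inferInstanceAs (Module 𝕜 (Shrink 𝕜))

/-- Linear equivalence from `𝕜` to its small model. -/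
def smallKEquiv : 𝕜 ≃ₗ[𝕜] SmallK.{u} 𝕜 := (Shrink.linearEquiv 𝕜 𝕜).symm

/-- Inner product space core on the small model of `𝕜`. -/
def smallKCore : InnerProductSpace.Core 𝕜 (SmallK.{u} 𝕜) where
  inner x y := inner (𝕜 := 𝕜) ((smallKEquiv 𝕜).symm x) ((smallKEquiv 𝕜).symm y)
  conj_inner_symm x y :=
    inner_conj_symm ((smallKEquiv 𝕜).symm x) ((smallKEquiv 𝕜).symm y)
  re_inner_nonneg x :=
    inner_self_nonneg (𝕜 := 𝕜) (x := (smallKEquiv 𝕜).symm x)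
  add_left x y z := by
    show inner (𝕜 := 𝕜) ((smallKEquiv 𝕜).symm (x + y)) _ = _
    rw [map_add]; exact inner_add_left _ _ _
  smul_left x y r := by
    show inner (𝕜 := 𝕜) ((smallKEquiv 𝕜).symm (r • x)) _ = _
    rw [map_smul]; exact inner_smul_left _ _ _
  definite x hx := by
    have hx' : inner (𝕜 := 𝕜) ((smallKEquiv 𝕜).symm x)
        ((smallKEquiv 𝕜).symm x) = 0 := hx
    have h : (smallKEquiv 𝕜).symm x = (smallKEquiv 𝕜).symm 0 := by
      rw [map_zero]; exact inner_self_eq_zero.mp hx'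
    exact (smallKEquiv 𝕜).symm.injective h

instance : NormedAddCommGroup (SmallK.{u} 𝕜) :=
  (smallKCore 𝕜).toNormedAddCommGroup

instance : InnerProductSpace 𝕜 (SmallK.{u} 𝕜) :=
  InnerProductSpace.ofCore (smallKCore 𝕜).toCore

/-- The small model of `𝕜` is isometrically isomorphic to `𝕜`. -/
def smallKIsometry : SmallK.{u} 𝕜 ≃ₗᵢ[𝕜] 𝕜 :=
  { (smallKEquiv 𝕜).symm with
    norm_map' := fun x => by
      show ‖(smallKEquiv 𝕜).symm x‖ = ‖x‖
      have h1 : ‖x‖ = Real.sqrt (RCLike.re (inner (𝕜 := 𝕜) x x)) :=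
        norm_eq_sqrt_re_inner x
      have h2 : ‖(smallKEquiv 𝕜).symm x‖ =
          Real.sqrt (RCLike.re (inner (𝕜 := 𝕜) ((smallKEquiv 𝕜).symm x)
            ((smallKEquiv 𝕜).symm x))) := norm_eq_sqrt_re_inner _
      rw [h1, h2]; rfl }

instance : CompleteSpace (SmallK.{u} 𝕜) := by
  have h : IsUniformEmbedding (smallKIsometry 𝕜) :=
    (smallKIsometry 𝕜).isometry.isUniformEmbedding
  exact (completeSpace_congr (e := (smallKIsometry 𝕜).toEquiv) h).mpr inferInstance

end SmallModel

/-- A continuous linear map `f : E → F` between Hilbert spaces is an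
epimorphism in the category of Hilbert spaces and continuous linear maps (i.e. it can be
cancelled on the right of continuous linear maps into any Hilbert space) if and only if
it has dense range. -/
theorem hilbert_epi_iff_denseRange
    {𝕜 E F : Type*} [RCLike 𝕜]
    [NormedAddCommGroup E] [InnerProductSpace 𝕜 E] [CompleteSpace E]
    [NormedAddCommGroup F] [InnerProductSpace 𝕜 F] [CompleteSpace F]
    (f : E →L[𝕜] F) :
    (∀ (G : Type*) [NormedAddCommGroup G] [InnerProductSpace 𝕜 G] [CompleteSpace G]
        (g h : F →L[𝕜] G), g.comp f = h.comp f → g = h) ↔ DenseRange f := by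
  constructor
  · intro H
    set K : Submodule 𝕜 F := (LinearMap.range (f : E →ₗ[𝕜] F)).topologicalClosure with hK
    have hbot : Kᗮ = ⊥ := by
      rw [Submodule.eq_bot_iff]
      intro y hy
      -- the functional `x ↦ ⟪y, x⟫`, valued in the small model of `𝕜`
      let g : F →L[𝕜] SmallK 𝕜 :=
        ((smallKIsometry 𝕜).symm.toLinearIsometry.toContinuousLinearMap).comp
          (innerSL 𝕜 y)
      have hcomp : g.comp f = (0 : F →L[𝕜] SmallK 𝕜).comp f := by
        ext x
        have hfx : f x ∈ K := Submodule.le_topologicalClosure _ ⟨x, rfl⟩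
        have hzero : inner (𝕜 := 𝕜) y (f x) = 0 := by
          have := (Submodule.mem_orthogonal K y).mp hy (f x) hfx
          rw [← inner_conj_symm, this, map_zero]
        simp only [ContinuousLinearMap.comp_apply, ContinuousLinearMap.zero_apply,
          LinearIsometry.coe_toContinuousLinearMap, LinearIsometryEquiv.coe_toLinearIsometry,
          innerSL_apply_apply, g, hzero]
        exact map_zero (smallKIsometry 𝕜).symm
      have h0 := H (SmallK 𝕜) g 0 hcomp
      have hyy : inner (𝕜 := 𝕜) y y = 0 := by
        have hgy := congrArg (fun (T : F →L[𝕜] SmallK 𝕜) => T y) h0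
        simp only [ContinuousLinearMap.zero_apply] at hgy
        have := congrArg (smallKIsometry 𝕜) hgy
        simpa [g] using this
      exact inner_self_eq_zero.mp hyy
    have htop : K = ⊤ := Submodule.orthogonal_eq_bot_iff.mp hbot
    rw [denseRange_iff_closure_range]
    have hcl : closure (Set.range f) = (K : Set F) :=
      (LinearMap.range (f : E →ₗ[𝕜] F)).topologicalClosure_coe.symm
    rw [hcl, htop]
    rfl
  · intro hd G _ _ _ g h hgh
    ext y
    refine DenseRange.induction_on hd y (isClosed_eq g.continuous h.continuous) ?_
    intro x
    exact congrArg (fun T : E →L[𝕜] G => T x) hgh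
end

section
/- Let H be a Hilbert space over 𝕜 (𝕜 = ℝ or ℂ) and let ℓ²(ℕ, H) be the Hilbert space of square-summable H-valued sequences. Let D be the linear span of the set of all elements of the form (single n v) − (single (n+1) v) for n ∈ ℕ and v ∈ H, where single n v denotes the sequence equal to v in coordinate n and 0 elsewhere. Then the orthogonal complement of D in ℓ²(ℕ, H) is the zero subspace; equivalently, D is dense in ℓ²(ℕ, H). -/
open Submodule

/-- In `ℓ²(ℕ, H)`, the span `D` of the elements
`single n v − single (n+1) v` (`n ∈ ℕ`, `v ∈ H`) has trivial orthogonal complement;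
equivalently, `D` is dense in `ℓ²(ℕ, H)`. -/
theorem kernel_span_dense_in_l2
    {𝕜 H : Type*} [RCLike 𝕜] [NormedAddCommGroup H] [InnerProductSpace 𝕜 H]
    [CompleteSpace H] :
    (Submodule.span 𝕜 {x : lp (fun _ : ℕ => H) 2 |
        ∃ n : ℕ, ∃ v : H, x = lp.single 2 n v - lp.single 2 (n + 1) v})ᗮ = ⊥ ∧
    Dense ((Submodule.span 𝕜 {x : lp (fun _ : ℕ => H) 2 |
        ∃ n : ℕ, ∃ v : H, x = lp.single 2 n v - lp.single 2 (n + 1) v} :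
          Submodule 𝕜 (lp (fun _ : ℕ => H) 2)) : Set (lp (fun _ : ℕ => H) 2)) := by
  have key : (Submodule.span 𝕜 {x : lp (fun _ : ℕ => H) 2 |
      ∃ n : ℕ, ∃ v : H, x = lp.single 2 n v - lp.single 2 (n + 1) v})ᗮ = ⊥ := by
    rw [Submodule.eq_bot_iff]
    intro y hy
    rw [Submodule.mem_orthogonal] at hy
    -- each consecutive pair of coordinates of y is equal
    have hstep : ∀ n : ℕ, y n = y (n + 1) := by
      intro n
      have h : ∀ v : H, (inner 𝕜 v (y n - y (n + 1)) : 𝕜) = 0 := by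
        intro v
        have := hy _ (Submodule.subset_span ⟨n, v, rfl⟩)
        rw [inner_sub_left, lp.inner_single_left, lp.inner_single_left] at this
        rw [inner_sub_right]
        linear_combination this
      have := h (y n - y (n + 1))
      rw [inner_self_eq_zero, sub_eq_zero] at this
      exact this
    have hconst : ∀ n : ℕ, y n = y 0 := by
      intro n
      induction n with
      | zero => rfl
      | succ k ih => rw [← hstep k, ih]
    -- summability forces the constant to be zero
    have hsum : Summable (fun n : ℕ => ‖y n‖ ^ (2 : ENNReal).toReal) :=
      (lp.memℓp y).summable (by norm_num)
    have h0 : y 0 = 0 := by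
      by_contra hne
      have hpos : 0 < ‖y 0‖ ^ (2 : ENNReal).toReal := by
        apply Real.rpow_pos_of_pos
        simpa using hne
      have : Summable (fun _ : ℕ => ‖y 0‖ ^ (2 : ENNReal).toReal) := by
        refine hsum.congr fun n => ?_
        rw [hconst n]
      have hfin := Set.Finite.of_summable_const hpos this
      exact Set.infinite_univ hfin
    ext n
    simp [hconst n, h0]
  refine ⟨key, ?_⟩
  rw [Submodule.dense_iff_topologicalClosure_eq_top,
    Submodule.topologicalClosure_eq_top_iff, key]
end

section
/- Let E be an inner product space and K a closed linear subspace of E. Then the quotient seminormed space E/K, with the quotient norm ‖[v]‖ = inf_{u∈K} ‖v − u‖, is a normed space whose norm satisfies the parallelogram identity: for all x, y ∈ E/K, ‖x + y‖² + ‖x − y‖² = 2‖x‖² + 2‖y‖². Consequently E/K is a pre-Hilbert space, and the quotient map E → E/K is continuous. -/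
open Submodule

private lemma quot_parallelogram_le {𝕜 E : Type*} [RCLike 𝕜] [NormedAddCommGroup E]
    [InnerProductSpace 𝕜 E] (K : Submodule 𝕜 E) (x y : E ⧸ K) :
    ‖x + y‖ ^ 2 + ‖x - y‖ ^ 2 ≤ 2 * ‖x‖ ^ 2 + 2 * ‖y‖ ^ 2 := by
  have key : ∀ ε : ℝ, 0 < ε → ε ≤ 1 →
      ‖x + y‖ ^ 2 + ‖x - y‖ ^ 2 ≤ 2 * ‖x‖ ^ 2 + 2 * ‖y‖ ^ 2
        + ε * (4 * ‖x‖ + 4 * ‖y‖ + 4) := by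
    intro ε hε hε1
    obtain ⟨a, rfl, ha⟩ := Submodule.Quotient.norm_mk_lt x hε
    obtain ⟨b, rfl, hb⟩ := Submodule.Quotient.norm_mk_lt y hε
    have h1 : ‖(Submodule.Quotient.mk a : E ⧸ K) + Submodule.Quotient.mk b‖ ≤ ‖a + b‖ := by
      rw [← Submodule.Quotient.mk_add]; exact Submodule.Quotient.norm_mk_le _ _
    have h2 : ‖(Submodule.Quotient.mk a : E ⧸ K) - Submodule.Quotient.mk b‖ ≤ ‖a - b‖ := by
      rw [← Submodule.Quotient.mk_sub]; exact Submodule.Quotient.norm_mk_le _ _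
    have hpar : ‖a + b‖ ^ 2 + ‖a - b‖ ^ 2 = 2 * ‖a‖ ^ 2 + 2 * ‖b‖ ^ 2 := by
      have := parallelogram_law_with_norm 𝕜 a b
      nlinarith [this]
    have hx0 : (0:ℝ) ≤ ‖(Submodule.Quotient.mk a : E ⧸ K)‖ := norm_nonneg _
    have hy0 : (0:ℝ) ≤ ‖(Submodule.Quotient.mk b : E ⧸ K)‖ := norm_nonneg _
    have ha0 : (0:ℝ) ≤ ‖a‖ := norm_nonneg _
    have hb0 : (0:ℝ) ≤ ‖b‖ := norm_nonneg _
    have hab0 : (0:ℝ) ≤ ‖a + b‖ := norm_nonneg _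
    have hab0' : (0:ℝ) ≤ ‖a - b‖ := norm_nonneg _
    nlinarith [sq_nonneg (‖a + b‖), sq_nonneg (‖a - b‖),
      mul_le_mul h1 h1 (norm_nonneg _) hab0, mul_le_mul h2 h2 (norm_nonneg _) hab0']
  by_contra h
  push_neg at h
  set C : ℝ := 4 * ‖x‖ + 4 * ‖y‖ + 4 with hC
  have hCpos : 0 < C := by positivity
  set δ : ℝ := (‖x + y‖ ^ 2 + ‖x - y‖ ^ 2 - (2 * ‖x‖ ^ 2 + 2 * ‖y‖ ^ 2)) with hδ
  have hδpos : 0 < δ := by simpa [hδ] using sub_pos.mpr h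
  have := key (min (δ / (2 * C)) 1) (by positivity) (min_le_right _ _)
  have hmin : min (δ / (2 * C)) 1 ≤ δ / (2 * C) := min_le_left _ _
  have : δ ≤ min (δ / (2 * C)) 1 * C := by linarith
  have : δ ≤ δ / (2 * C) * C := le_trans this (by
    apply mul_le_mul_of_nonneg_right hmin hCpos.le)
  rw [div_mul_eq_mul_div, mul_comm] at this
  have h2 : δ ≤ δ / 2 := by
    calc δ ≤ C * δ / (2 * C) := this
    _ = δ / 2 := by field_simp
  linarith

/-- For a closed subspace `K` of a (not necessarily complete) inner
product space `E`, the quotient `E ⧸ K` with the quotient norm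
`‖[v]‖ = inf_{u ∈ K} ‖v − u‖` is a normed space (the quotient seminorm is definite)
satisfying the parallelogram identity — hence `E ⧸ K` is a pre-Hilbert space — and the
quotient map `E → E ⧸ K` is continuous. -/
theorem quotient_preHilbert
    {𝕜 E : Type*} [RCLike 𝕜] [NormedAddCommGroup E] [InnerProductSpace 𝕜 E]
    (K : Submodule 𝕜 E) (hK : IsClosed (K : Set E)) :
    (∀ v : E, ‖K.mkQ v‖ = sInf ((fun u => ‖v - u‖) '' (K : Set E))) ∧
    (∀ x : E ⧸ K, ‖x‖ = 0 → x = 0) ∧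
    (∀ x y : E ⧸ K, ‖x + y‖ ^ 2 + ‖x - y‖ ^ 2 = 2 * ‖x‖ ^ 2 + 2 * ‖y‖ ^ 2) ∧
    Continuous K.mkQ := by
  refine ⟨?_, ?_, ?_, ?_⟩
  · intro v
    have : K.mkQ v = (QuotientAddGroup.mk v : E ⧸ K.toAddSubgroup) := rfl
    rw [Submodule.mkQ_apply]
    rw [show ‖(Submodule.Quotient.mk v : E ⧸ K)‖
        = Metric.infDist v (K : Set E) from QuotientAddGroup.norm_mk (S := K.toAddSubgroup) v]
    rw [Metric.infDist_eq_iInf, ← sInf_image']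
    congr 1
    ext r
    simp [dist_eq_norm]
  · intro x hx
    obtain ⟨a, rfl⟩ := Submodule.Quotient.mk_surjective K x
    have : a ∈ K := by
      have h := (QuotientAddGroup.norm_mk_eq_zero_iff_mem_closure (S := K.toAddSubgroup) (m := a)).1 hx
      exact hK.closure_subset h
    simpa [Submodule.Quotient.mk_eq_zero] using this
  · intro x y
    have h1 := quot_parallelogram_le (𝕜 := 𝕜) K x y
    have h2 := quot_parallelogram_le (𝕜 := 𝕜) K (x + y) (x - y)
    have e1 : x + y + (x - y) = (2 : 𝕜) • x := by rw [two_smul]; abel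
    have e2 : x + y - (x - y) = (2 : 𝕜) • y := by rw [two_smul]; abel
    rw [e1, e2] at h2
    have n1 : ‖(2 : 𝕜) • x‖ = 2 * ‖x‖ := by
      rw [norm_smul]; norm_num
    have n2 : ‖(2 : 𝕜) • y‖ = 2 * ‖y‖ := by
      rw [norm_smul]; norm_num
    rw [n1, n2] at h2
    nlinarith [h1, h2]
  · exact AddMonoidHomClass.continuous_of_bound K.mkQ 1
      (fun v => by simpa using Submodule.Quotient.norm_mk_le K v)
end

section
/- Let E be an inner product space over ℝ, K a linear subspace of E, x, y ∈ E, and ε > 0. Then there exist u, v ∈ K such that ‖x − u‖ ≤ inf_{w∈K} ‖x − w‖ + ε, ‖y − v‖ ≤ inf_{w∈K} ‖y − w‖ + ε, and ‖(x + y) − (u + v)‖ ≤ inf_{w∈K} ‖(x + y) − w‖ + ε. -/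
open UniformSpace Metric

/-- Auxiliary: the distance from `z` to `K` equals the distance in the completion to the
closure of the image of `K`, which is realized by the orthogonal projection. -/
private lemma infDist_eq_norm_sub_proj
    {E : Type*} [NormedAddCommGroup E] [InnerProductSpace ℝ E]
    (K : Submodule ℝ E) (z : E) :
    Metric.infDist z (K : Set E) =
      ‖(Completion.toComplₗᵢ (𝕜 := ℝ) (E := E)) z -
        (Submodule.orthogonalProjectionOnto
          ((K.map (Completion.toComplₗᵢ (𝕜 := ℝ) (E := E)).toLinearMap).topologicalClosure)
          ((Completion.toComplₗᵢ (𝕜 := ℝ) (E := E)) z) : Completion E)‖ := by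
  set ι := (Completion.toComplₗᵢ (𝕜 := ℝ) (E := E))
  set Kc := (K.map ι.toLinearMap).topologicalClosure
  have h1 : Metric.infDist z (K : Set E) = Metric.infDist (ι z) (ι '' (K : Set E)) :=
    (Metric.infDist_image ι.isometry).symm
  have hKc : (Kc : Set (Completion E)) = closure (ι '' (K : Set E)) := by
    simp [Kc, Submodule.topologicalClosure_coe, Submodule.map_coe]
  have h2 : Metric.infDist (ι z) (ι '' (K : Set E))
      = Metric.infDist (ι z) (Kc : Set (Completion E)) := by
    rw [hKc, Metric.infDist_closure]
  rw [h1, h2, ← Submodule.starProjection_apply, Submodule.starProjection_minimal, Metric.infDist_eq_iInf]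
  congr 1
  ext w
  rw [dist_eq_norm]

/-- In a real inner product space `E` with a subspace `K`, given
`x, y ∈ E` and `ε > 0`, one can choose near-minimizers `u, v ∈ K` of the distances from
`x` and from `y` to `K` such that `u + v` is a near-minimizer of the distance from
`x + y` to `K`. -/
theorem exists_near_minimizers_add
    {E : Type*} [NormedAddCommGroup E] [InnerProductSpace ℝ E]
    (K : Submodule ℝ E) (x y : E) (ε : ℝ) (hε : 0 < ε) :
    ∃ u ∈ K, ∃ v ∈ K,
      ‖x - u‖ ≤ Metric.infDist x (K : Set E) + ε ∧
      ‖y - v‖ ≤ Metric.infDist y (K : Set E) + ε ∧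
      ‖x + y - (u + v)‖ ≤ Metric.infDist (x + y) (K : Set E) + ε := by
  set ι := (Completion.toComplₗᵢ (𝕜 := ℝ) (E := E)) with hι
  set Kc := (K.map ι.toLinearMap).topologicalClosure with hKc
  set P := Submodule.orthogonalProjectionOnto Kc with hP
  have hmem : ∀ w : Completion E, w ∈ Kc → ∀ δ : ℝ, 0 < δ →
      ∃ u ∈ K, ‖w - ι u‖ < δ := by
    intro w hw δ hδ
    have hset : (Kc : Set (Completion E)) = closure (ι '' (K : Set E)) := by
      simp [hKc, Submodule.topologicalClosure_coe, Submodule.map_coe]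
    have hw' : w ∈ closure (ι '' (K : Set E)) := by rw [← hset]; exact hw
    rcases Metric.mem_closure_iff.1 hw' δ hδ with ⟨p, hp, hdp⟩
    rcases hp with ⟨u, huK, rfl⟩
    exact ⟨u, huK, by rwa [dist_eq_norm] at hdp⟩
  obtain ⟨u, huK, hu⟩ := hmem (P (ι x)) (Submodule.coe_mem _) (ε/2) (by linarith)
  obtain ⟨v, hvK, hv⟩ := hmem (P (ι y)) (Submodule.coe_mem _) (ε/2) (by linarith)
  refine ⟨u, huK, v, hvK, ?_, ?_, ?_⟩
  · rw [← ι.norm_map (x - u), map_sub]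
    calc ‖ι x - ι u‖
        ≤ ‖ι x - (P (ι x) : Completion E)‖ + ‖(P (ι x) : Completion E) - ι u‖ :=
          norm_sub_le_norm_sub_add_norm_sub _ _ _
      _ ≤ Metric.infDist x (K : Set E) + ε := by
          rw [← infDist_eq_norm_sub_proj K x]; linarith [hu]
  · rw [← ι.norm_map (y - v), map_sub]
    calc ‖ι y - ι v‖
        ≤ ‖ι y - (P (ι y) : Completion E)‖ + ‖(P (ι y) : Completion E) - ι v‖ :=
          norm_sub_le_norm_sub_add_norm_sub _ _ _
      _ ≤ Metric.infDist y (K : Set E) + ε := by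
          rw [← infDist_eq_norm_sub_proj K y]; linarith [hv]
  · rw [← ι.norm_map (x + y - (u + v)), map_sub]
    have hPadd : (P (ι (x + y)) : Completion E) = (P (ι x) : Completion E) + (P (ι y) : Completion E) := by
      rw [map_add ι, map_add P]; rfl
    calc ‖ι (x + y) - ι (u + v)‖
        ≤ ‖ι (x + y) - (P (ι (x + y)) : Completion E)‖
          + ‖(P (ι (x + y)) : Completion E) - ι (u + v)‖ :=
          norm_sub_le_norm_sub_add_norm_sub _ _ _
      _ ≤ Metric.infDist (x + y) (K : Set E) + ε := by
          rw [← infDist_eq_norm_sub_proj K (x + y)]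
          have h2 : ‖(P (ι (x + y)) : Completion E) - ι (u + v)‖
              ≤ ‖(P (ι x) : Completion E) - ι u‖ + ‖(P (ι y) : Completion E) - ι v‖ := by
            rw [hPadd, map_add ι]
            have : (P (ι x) : Completion E) + (P (ι y) : Completion E) - (ι u + ι v)
                = ((P (ι x) : Completion E) - ι u) + ((P (ι y) : Completion E) - ι v) := by abel
            rw [this]
            exact norm_add_le _ _
          linarith [hu, hv]
end
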